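/- arXiv:2008.01916 — 5 statements merged into one kernel-verified Lean document; each statement's English description precedes it below -/
import Mathlib

section
/- Let ι be a finite nonempty index set and 𝒳 a type of records, and model datasets as functions D : ι → 𝒳. Let f : (ι → 𝒳) → ℝ be a query, let ε > 0 and Δ > 0, and assume that |f(D) − f(D′)| ≤ Δ for all neighbouring datasets D, D′. For each dataset D, let μ_D be the probability measure on ℝ with density x ↦ (ε/(2Δ))·exp(−ε·|x − f(D)|/Δ) with respect to Lebesgue measure (the Laplace mechanism with noise Lap(Δ/ε) added to f(D)). Then the Laplace mechanism satisfies ε-differential privacy: for all neighbouring datasets D, D′ and every measurable set S ⊆ ℝ, μ_D(S) ≤ exp(ε)·μ_{D′}(S). -/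
open MeasureTheory

/-- Two datasets are neighbouring if they differ at exactly one index. -/
def Neighbouring {ι 𝒳 : Type*} (D D' : ι → 𝒳) : Prop :=
  ∃ i, D i ≠ D' i ∧ ∀ j, j ≠ i → D j = D' j

/-- The Laplace mechanism `f(D) + Lap(Δ/ε)`, as the measure on `ℝ` with density
`x ↦ (ε/(2Δ)) · exp (-ε·|x - f D|/Δ)` with respect to Lebesgue measure. -/
noncomputable def laplaceMechanism {ι 𝒳 : Type*} (f : (ι → 𝒳) → ℝ) (ε Δ : ℝ)
    (D : ι → 𝒳) : Measure ℝ :=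
  volume.withDensity fun x =>
    ENNReal.ofReal ((ε / (2 * Δ)) * Real.exp (-(ε * |x - f D|) / Δ))

/-- The Laplace mechanism satisfies `ε`-differential privacy: if the query `f` has
sensitivity at most `Δ` over neighbouring datasets, then for all neighbouring `D, D'`
and every measurable `S ⊆ ℝ`, `μ_D(S) ≤ exp ε · μ_{D'}(S)`. -/
theorem laplaceMechanism_dp {ι 𝒳 : Type*} [Fintype ι] [Nonempty ι]
    (f : (ι → 𝒳) → ℝ) (ε Δ : ℝ) (hε : 0 < ε) (hΔ : 0 < Δ)
    (hsens : ∀ D D' : ι → 𝒳, Neighbouring D D' → |f D - f D'| ≤ Δ) :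
    ∀ D D' : ι → 𝒳, Neighbouring D D' → ∀ S : Set ℝ, MeasurableSet S →
      laplaceMechanism f ε Δ D S ≤
        ENNReal.ofReal (Real.exp ε) * laplaceMechanism f ε Δ D' S := by
  intro D D' hN S hS
  have hratio : ∀ x : ℝ,
      ENNReal.ofReal ((ε / (2 * Δ)) * Real.exp (-(ε * |x - f D|) / Δ)) ≤
      ENNReal.ofReal (Real.exp ε) *
        ENNReal.ofReal ((ε / (2 * Δ)) * Real.exp (-(ε * |x - f D'|) / Δ)) := by
    intro x
    rw [← ENNReal.ofReal_mul (Real.exp_nonneg ε)]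
    apply ENNReal.ofReal_le_ofReal
    rw [show Real.exp ε * ((ε / (2 * Δ)) * Real.exp (-(ε * |x - f D'|) / Δ)) =
        (ε / (2 * Δ)) * (Real.exp ε * Real.exp (-(ε * |x - f D'|) / Δ)) by ring,
      ← Real.exp_add]
    apply mul_le_mul_of_nonneg_left _ (by positivity)
    apply Real.exp_le_exp.mpr
    have h1 : |x - f D'| - |x - f D| ≤ Δ := by
      calc |x - f D'| - |x - f D| ≤ |(x - f D') - (x - f D)| := by
            exact abs_sub_abs_le_abs_sub _ _
        _ = |f D - f D'| := by rw [show (x - f D') - (x - f D) = f D - f D' by ring]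
        _ ≤ Δ := hsens D D' hN
    rw [div_le_iff₀ hΔ, add_mul, div_mul_cancel₀ _ hΔ.ne']
    nlinarith [mul_le_mul_of_nonneg_left h1 hε.le]
  calc laplaceMechanism f ε Δ D S
      = ∫⁻ x in S, ENNReal.ofReal ((ε / (2 * Δ)) * Real.exp (-(ε * |x - f D|) / Δ)) := by
        rw [laplaceMechanism, withDensity_apply _ hS]
    _ ≤ ∫⁻ x in S, ENNReal.ofReal (Real.exp ε) *
          ENNReal.ofReal ((ε / (2 * Δ)) * Real.exp (-(ε * |x - f D'|) / Δ)) :=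
        lintegral_mono fun x => hratio x
    _ = ENNReal.ofReal (Real.exp ε) * laplaceMechanism f ε Δ D' S := by
        rw [lintegral_const_mul' _ _ (by simp), laplaceMechanism, withDensity_apply _ hS]
end

section
/- Let ι be a finite nonempty index set and 𝒳 a type of records, and model datasets as functions D : ι → 𝒳. Let f : (ι → 𝒳) → ℝ be a query, let 0 < ε < 1, 0 < δ < 1, Δ > 0, and assume |f(D) − f(D′)| ≤ Δ for all neighbouring datasets D, D′. Set σ = Δ·√(2·ln(1.25/δ))/ε, and for each dataset D let μ_D be the Gaussian measure on ℝ with mean f(D) and variance σ² (the Gaussian mechanism). Then the Gaussian mechanism satisfies (ε, δ)-differential privacy: for all neighbouring datasets D, D′ and every measurable set S ⊆ ℝ, μ_D(S) ≤ exp(ε)·μ_{D′}(S) + δ. -/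
open MeasureTheory

open ProbabilityTheory Real Set
open scoped ENNReal

open MeasureTheory ProbabilityTheory Real Set
open scoped ENNReal

lemma gauss_refl (μ : ℝ) (v : NNReal) :
    (gaussianReal μ v).map (fun x => 2*μ - x) = gaussianReal μ v := by
  have h1 : (fun x : ℝ => 2*μ - x) = (fun x => x + 2*μ) ∘ (fun x => (-1) * x) := by
    ext x; simp; ring
  rw [h1, ← Measure.map_map (by fun_prop) (by fun_prop)]
  rw [show (fun x : ℝ => (-1)*x) = ((-1 : ℝ) * ·) from rfl, gaussianReal_map_const_mul]
  rw [show (fun x : ℝ => x + 2*μ) = (· + (2*μ)) from rfl, gaussianReal_map_add_const]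
  congr 1
  · ring
  · ext; simp

lemma gauss_Iio_eq_Ioi (μ : ℝ) (v : NNReal) (s : ℝ) :
    gaussianReal μ v (Set.Iio s) = gaussianReal μ v (Set.Ioi (2*μ - s)) := by
  conv_lhs => rw [← gauss_refl μ v]
  rw [Measure.map_apply (by fun_prop) measurableSet_Iio]
  congr 1
  ext x
  simp only [mem_preimage, mem_Iio, mem_Ioi]
  constructor <;> intro h <;> linarith

lemma gauss_singleton (μ : ℝ) {v : NNReal} (hv : v ≠ 0) (a : ℝ) :
    gaussianReal μ v {a} = 0 := by
  rw [gaussianReal_apply μ hv]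
  rw [show ({a} : Set ℝ) = {a} from rfl]
  rw [MeasureTheory.setLIntegral_measure_zero _ _ (measure_singleton a)]

lemma gauss_half (μ : ℝ) {v : NNReal} (hv : v ≠ 0) :
    gaussianReal μ v (Set.Ioi μ) = 1/2 := by
  have hsplit : (Set.Iio μ) ∪ {μ} ∪ (Set.Ioi μ) = Set.univ := by
    ext x
    simp only [Set.mem_union, Set.mem_Iio, Set.mem_singleton_iff, Set.mem_Ioi, Set.mem_univ,
      iff_true]
    rcases lt_trichotomy x μ with h|h|h <;> tauto
  have h1 : gaussianReal μ v (Set.Iio μ) = gaussianReal μ v (Set.Ioi μ) := by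
    rw [gauss_Iio_eq_Ioi]
    congr 1; ext x; simp only [Set.mem_Ioi]; constructor <;> intro h <;> linarith
  have huniv : (gaussianReal μ v) Set.univ = 1 := measure_univ
  rw [← hsplit] at huniv
  rw [measure_union (by simp [Set.disjoint_left]) measurableSet_Ioi] at huniv
  rw [measure_union (by simp [Set.disjoint_left]; intro a h; exact ne_of_lt h) (measurableSet_singleton μ)] at huniv
  rw [gauss_singleton μ hv, add_zero, h1] at huniv
  have : (2:ℝ≥0∞) ≠ ⊤ := ENNReal.ofNat_ne_top
  rw [← two_mul] at huniv
  rw [ENNReal.eq_div_iff (by norm_num) (by norm_num)]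
  rw [mul_comm] at huniv ⊢
  simpa using huniv




lemma pdf_le_shift {v : NNReal} (hv : v ≠ 0) {μ s x : ℝ} (hs : μ ≤ s) (hx : s ≤ x) :
    gaussianPDFReal μ v x ≤ rexp (-(s-μ)^2/(2*v)) * gaussianPDFReal s v x := by
  have hvpos : (0:ℝ) < v := by positivity
  unfold gaussianPDFReal
  rw [show rexp (-(s-μ)^2/(2*↑v)) * ((√(2*π*↑v))⁻¹ * rexp (-(x-s)^2/(2*↑v)))
    = (√(2*π*↑v))⁻¹ * rexp (-(s-μ)^2/(2*↑v) + -(x-s)^2/(2*↑v)) by rw [Real.exp_add]; ring]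
  have hC : (0:ℝ) ≤ (√(2 * π * v))⁻¹ := by positivity
  apply mul_le_mul_of_nonneg_left _ hC
  apply Real.exp_le_exp.mpr
  rw [← add_div, div_le_div_iff_of_pos_right (by linarith)]
  nlinarith [mul_nonneg (sub_nonneg.mpr hs) (sub_nonneg.mpr hx)]

lemma gauss_tail {v : NNReal} (hv : v ≠ 0) {μ s : ℝ} (hs : μ ≤ s) :
    gaussianReal μ v (Set.Ioi s) ≤ ENNReal.ofReal (rexp (-(s-μ)^2/(2*v)) / 2) := by
  rw [gaussianReal_apply μ hv]
  have : ∫⁻ x in Set.Ioi s, gaussianPDF μ v x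
      ≤ ∫⁻ x in Set.Ioi s, ENNReal.ofReal (rexp (-(s-μ)^2/(2*v))) * gaussianPDF s v x := by
    apply setLIntegral_mono ((measurable_gaussianPDF s v).const_mul _) (fun x hx => ?_)
    rw [gaussianPDF, gaussianPDF, ← ENNReal.ofReal_mul (by positivity)]
    exact ENNReal.ofReal_le_ofReal (pdf_le_shift hv hs (le_of_lt hx))
  refine this.trans ?_
  rw [lintegral_const_mul _ (measurable_gaussianPDF s v), ← gaussianReal_apply s hv, gauss_half s hv,
    ENNReal.ofReal_div_of_pos (by norm_num), mul_one_div]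
  norm_num

lemma gauss_band {v : NNReal} (hv : v ≠ 0) {μ s : ℝ} (hs : s ≤ μ) :
    gaussianReal μ v (Set.Ioc s μ) ≤ ENNReal.ofReal ((μ - s) * (√(2 * π * v))⁻¹) := by
  rw [gaussianReal_apply μ hv]
  have : ∫⁻ x in Set.Ioc s μ, gaussianPDF μ v x
      ≤ ∫⁻ _ in Set.Ioc s μ, ENNReal.ofReal ((√(2 * π * v))⁻¹) := by
    apply setLIntegral_mono (by fun_prop) (fun x _ => ?_)
    apply ENNReal.ofReal_le_ofReal
    unfold gaussianPDFReal
    have hvpos : (0:ℝ) < v := by positivity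
    nth_rewrite 2 [← mul_one ((√(2 * π * v))⁻¹)]
    apply mul_le_mul_of_nonneg_left _ (by positivity)
    apply Real.exp_le_one_iff.mpr
    apply div_nonpos_of_nonpos_of_nonneg (neg_nonpos.mpr (sq_nonneg _)) (by positivity)
  refine this.trans ?_
  rw [setLIntegral_const, Real.volume_Ioc, ← ENNReal.ofReal_mul (by positivity)]
  exact le_of_eq (by rw [mul_comm])



lemma exp_half_le : rexp (1/2) ≤ 2.5 := by
  have h := Real.exp_one_lt_d9
  have h2 : rexp (1/2) * rexp (1/2) = rexp 1 := by rw [← Real.exp_add]; norm_num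
  nlinarith [Real.exp_pos (1/2 : ℝ)]

set_option maxHeartbeats 2000000 in
lemma bad_bound {ε δ Δ σ a : ℝ} (hε : 0 < ε) (hε1 : ε < 1) (hδ : 0 < δ) (hδ1 : δ < 1)
    (hΔ : 0 < Δ) (hσ : σ = Δ * Real.sqrt (2 * Real.log (1.25 / δ)) / ε)
    (ha : 0 < a) (haΔ : a ≤ Δ) (μ : ℝ) :
    gaussianReal μ (⟨σ^2, sq_nonneg σ⟩ : NNReal) (Set.Ioi (μ + (σ^2*ε/a - a/2)))
      ≤ ENNReal.ofReal δ := by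
  set L := Real.log (1.25 / δ) with hL
  have hL0 : 0 < L := Real.log_pos (by rw [lt_div_iff₀ hδ]; linarith)
  have hL2 : (0.2:ℝ) ≤ L := by
    have h := Real.log_le_sub_one_of_pos (show (0:ℝ) < δ/1.25 by positivity)
    have h2 : Real.log (δ/1.25) = -L := by
      rw [hL, ← Real.log_inv, inv_div]
    rw [h2] at h
    have h8 : δ/1.25 = 0.8 * δ := by ring
    rw [h8] at h
    nlinarith
  have hσpos : 0 < σ := by
    rw [hσ]
    have : 0 < Real.sqrt (2*L) := Real.sqrt_pos.mpr (by linarith)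
    positivity
  have hΔ2 : (0:ℝ) < Δ^2 := by positivity
  have hv : ((⟨σ^2, sq_nonneg σ⟩ : NNReal)) ≠ 0 :=
    fun h => pow_ne_zero 2 hσpos.ne' (congrArg NNReal.toReal h)
  have hσ2' : σ^2 * ε^2 = 2 * Δ^2 * L := by
    rw [hσ, div_pow, mul_pow, Real.sq_sqrt (by linarith)]
    field_simp
  have hexpL : Real.exp (-L) = δ / 1.25 := by
    rw [Real.exp_neg, hL, Real.exp_log (by positivity), inv_div]
  clear_value L
  set m : ℝ := σ^2*ε/a - a/2 with hm
  clear_value m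
  rcases le_or_gt 0 m with hm0 | hm0
  · -- tail case
    refine (gauss_tail hv (by linarith : μ ≤ μ + m)).trans ?_
    apply ENNReal.ofReal_le_ofReal
    simp only [NNReal.coe_mk, show μ + m - μ = m by ring]
    change rexp (-m^2/(2*σ^2)) / 2 ≤ δ
    rcases le_or_gt 0 (σ^2*ε/Δ - Δ/2) with h0 | h0
    · -- genuine tail bound
      have hmm : σ^2*ε/Δ - Δ/2 ≤ m := by
        have h1 : σ^2*ε/Δ ≤ σ^2*ε/a := by
          apply div_le_div_of_nonneg_left (by positivity) ha haΔ
        have h2 : a/2 ≤ Δ/2 := by linarith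
        rw [hm]; linarith
      have hkey : (L - ε/2) * (2*σ^2) ≤ m^2 := by
        have hN : (L - ε/2)*(2*σ^2)*Δ^2 + Δ^4/4 = (σ^2*ε - Δ^2/2)^2 := by
          linear_combination (-σ^2) * hσ2'
        have heq : σ^2*ε/Δ - Δ/2 = (σ^2*ε - Δ^2/2)/Δ := by field_simp
        have hm0sq : ((σ^2*ε - Δ^2/2)/Δ)^2 ≤ m^2 := by
          rw [← heq]; nlinarith
        have hdd : ((σ^2*ε - Δ^2/2)/Δ)^2 * Δ^2 = (σ^2*ε - Δ^2/2)^2 := by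
          field_simp
        nlinarith [mul_le_mul_of_nonneg_right hm0sq hΔ2.le]
      have hkey' : L - ε/2 ≤ m^2/(2*σ^2) := by
        rw [le_div_iff₀ (by positivity)]; exact hkey
      have hexp : rexp (-m^2/(2*σ^2)) ≤ (δ/1.25) * rexp (ε/2) := by
        rw [← hexpL, ← Real.exp_add]
        apply Real.exp_le_exp.mpr
        rw [neg_div]
        linarith
      have heps : rexp (ε/2) ≤ 2.5 := by
        calc rexp (ε/2) ≤ rexp (1/2) := Real.exp_le_exp.mpr (by linarith)
          _ ≤ 2.5 := exp_half_le
      have hfin : rexp (-m^2/(2*σ^2)) ≤ 2 * δ := by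
        calc rexp (-m^2/(2*σ^2)) ≤ (δ/1.25) * rexp (ε/2) := hexp
          _ ≤ (δ/1.25) * 2.5 := mul_le_mul_of_nonneg_left heps (by positivity)
          _ = 2 * δ := by ring
      linarith
    · -- large δ case: exp ≤ 1 and δ ≥ 1/2
      have hse : σ^2 * ε < Δ^2/2 := by
        have h1 := (div_lt_iff₀ hΔ).mp (show σ^2*ε/Δ < Δ/2 by linarith)
        nlinarith
      have h4L : 4*L < ε := by
        nlinarith [mul_lt_mul_of_pos_right hse hε]
      have hδhalf : 1/2 ≤ δ := by
        have h5 : 1 - L ≤ rexp (-L) := by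
          have := Real.add_one_le_exp (-L); linarith
        rw [hexpL, show δ/1.25 = 0.8*δ from by ring] at h5
        linarith
      have hexp1 : rexp (-m^2/(2*σ^2)) ≤ 1 := by
        apply Real.exp_le_one_iff.mpr
        rw [neg_div]
        simp only [neg_nonpos]
        positivity
      linarith
  · -- m < 0 : split at μ
    have hcover : Set.Ioi (μ + m) ⊆ Set.Ioc (μ + m) μ ∪ Set.Ioi μ := by
      intro x hx
      rcases le_or_gt x μ with h|h
      · exact Or.inl ⟨hx, h⟩
      · exact Or.inr h
    have hsplit : gaussianReal μ (⟨σ^2, sq_nonneg σ⟩ : NNReal) (Set.Ioi (μ+m))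
        ≤ gaussianReal μ (⟨σ^2, sq_nonneg σ⟩ : NNReal) (Set.Ioc (μ+m) μ)
          + gaussianReal μ (⟨σ^2, sq_nonneg σ⟩ : NNReal) (Set.Ioi μ) :=
      (measure_mono hcover).trans (measure_union_le _ _)
    have hband := gauss_band hv (show μ + m ≤ μ by linarith)
    have hhalf := gauss_half μ hv
    -- numeric facts
    have hse : σ^2 * ε < Δ^2/2 := by
      have h1 := (div_lt_iff₀ ha).mp (show σ^2*ε/a < a/2 by rw [hm] at hm0; linarith)
      nlinarith
    have h4L : 4*L < ε := by
      nlinarith [mul_lt_mul_of_pos_right hse hε]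
    have hδbig : 1.25*(1 - ε/4) ≤ δ := by
      have h5 : 1 - L ≤ rexp (-L) := by have := Real.add_one_le_exp (-L); linarith
      rw [hexpL, show δ/1.25 = 0.8*δ from by ring] at h5
      linarith
    -- bound the band term
    have hπ : (3.14:ℝ) ≤ π := by linarith [Real.pi_gt_d6]
    have hsqrt : (1.58:ℝ)*Δ/ε ≤ Real.sqrt (2*π*σ^2) := by
      rw [Real.le_sqrt (by positivity) (by positivity), div_pow, mul_pow,
        div_le_iff₀ (by positivity)]
      have h1 : 2*π*σ^2*ε^2 = 4*Δ^2*(π*L) := by linear_combination 2*π*hσ2'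
      have h2 : (3.14:ℝ)*0.2 ≤ π*L := by
        apply mul_le_mul hπ hL2 (by norm_num) (by linarith)
      nlinarith
    have hbandR : (μ - (μ + m)) * (√(2 * π * ((⟨σ^2, sq_nonneg σ⟩ : NNReal):ℝ)))⁻¹
        ≤ ε/3.16 := by
      simp only [NNReal.coe_mk]
      have hnm : 0 ≤ -m := by linarith
      have hnm2 : -m ≤ Δ/2 := by
        have : 0 < σ^2*ε/a := by positivity
        rw [hm]
        have hp : 0 < σ^2*ε/a := by positivity
        linarith
      have hs0 : (0:ℝ) < 1.58*Δ/ε := by positivity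
      have hinv : (√(2*π*σ^2))⁻¹ ≤ (1.58*Δ/ε)⁻¹ :=
        inv_anti₀ hs0 hsqrt
      calc (μ - (μ+m)) * (√(2*π*σ^2))⁻¹ = (-m) * (√(2*π*σ^2))⁻¹ := by ring_nf
        _ ≤ (Δ/2) * (1.58*Δ/ε)⁻¹ := by
            apply mul_le_mul hnm2 hinv (by positivity) (by linarith)
        _ = ε/3.16 := by field_simp; ring
    -- combine
    calc gaussianReal μ _ (Set.Ioi (μ + m))
        ≤ gaussianReal μ _ (Set.Ioc (μ+m) μ) + gaussianReal μ _ (Set.Ioi μ) := hsplit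
      _ ≤ ENNReal.ofReal (ε/3.16) + 1/2 := by
          gcongr
          · exact hband.trans (ENNReal.ofReal_le_ofReal hbandR)
          · exact le_of_eq hhalf
      _ ≤ ENNReal.ofReal δ := by
          rw [show (1/2 : ENNReal) = ENNReal.ofReal (1/2) by
              rw [show (1/2:ℝ) = 2⁻¹ from by norm_num, ENNReal.ofReal_inv_of_pos two_pos,
                ENNReal.ofReal_ofNat, one_div],
            ← ENNReal.ofReal_add (by positivity) (by norm_num)]
          apply ENNReal.ofReal_le_ofReal
          rw [div_eq_mul_inv, show ((3.16:ℝ))⁻¹ = 25/79 from by norm_num]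
          linarith


/-- The Gaussian mechanism: the Gaussian measure on `ℝ` with mean `f D`
and variance `σ²`. -/
noncomputable def gaussianMechanism {ι 𝒳 : Type*} (f : (ι → 𝒳) → ℝ) (σ : ℝ)
    (D : ι → 𝒳) : Measure ℝ :=
  ProbabilityTheory.gaussianReal (f D) (⟨σ ^ 2, sq_nonneg σ⟩ : NNReal)

set_option maxHeartbeats 2000000 in
/-- The Gaussian mechanism with `σ = Δ·√(2·ln(1.25/δ))/ε` satisfies
`(ε, δ)`-differential privacy: if `0 < ε < 1`, `0 < δ < 1` and the query `f` has
sensitivity at most `Δ` over neighbouring datasets, then for all neighbouring `D, D'`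
and every measurable `S ⊆ ℝ`, `μ_D(S) ≤ exp ε · μ_{D'}(S) + δ`. -/
theorem gaussianMechanism_dp {ι 𝒳 : Type*} [Fintype ι] [Nonempty ι]
    (f : (ι → 𝒳) → ℝ) (ε δ Δ : ℝ)
    (hε : 0 < ε) (hε1 : ε < 1) (hδ : 0 < δ) (hδ1 : δ < 1) (hΔ : 0 < Δ)
    (hsens : ∀ D D' : ι → 𝒳, Neighbouring D D' → |f D - f D'| ≤ Δ)
    (σ : ℝ) (hσ : σ = Δ * Real.sqrt (2 * Real.log (1.25 / δ)) / ε) :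
    ∀ D D' : ι → 𝒳, Neighbouring D D' → ∀ S : Set ℝ, MeasurableSet S →
      gaussianMechanism f σ D S ≤
        ENNReal.ofReal (Real.exp ε) * gaussianMechanism f σ D' S +
          ENNReal.ofReal δ := by
  intro D D' hN S hS
  have hL0 : 0 < Real.log (1.25/δ) := Real.log_pos (by rw [lt_div_iff₀ hδ]; linarith)
  have hσpos : 0 < σ := by
    rw [hσ]
    have : 0 < Real.sqrt (2 * Real.log (1.25/δ)) := Real.sqrt_pos.mpr (by linarith)
    positivity
  set v : NNReal := (⟨σ^2, sq_nonneg σ⟩ : NNReal) with hvdef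
  have hv : v ≠ 0 := fun h => pow_ne_zero 2 hσpos.ne' (congrArg NNReal.toReal h)
  have hexpε : (1:ℝ≥0∞) ≤ ENNReal.ofReal (Real.exp ε) := by
    rw [show (1:ℝ≥0∞) = ENNReal.ofReal 1 by simp]
    exact ENNReal.ofReal_le_ofReal (Real.one_le_exp hε.le)
  show gaussianReal (f D) v S
      ≤ ENNReal.ofReal (Real.exp ε) * gaussianReal (f D') v S + ENNReal.ofReal δ
  by_cases haz : f D = f D'
  · rw [haz]
    calc gaussianReal (f D') v S
        ≤ ENNReal.ofReal (Real.exp ε) * gaussianReal (f D') v S := by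
          nth_rewrite 1 [← one_mul (gaussianReal (f D') v S)]
          exact mul_le_mul_left hexpε _
      _ ≤ _ := le_self_add
  · set a : ℝ := f D - f D' with hadef
    have ha0 : a ≠ 0 := sub_ne_zero.mpr haz
    clear_value a
    have haΔ : |a| ≤ Δ := hadef ▸ hsens D D' hN
    set G : Set ℝ := {x | a*(2*x - (f D + f D')) ≤ 2*σ^2*ε} with hG
    have hGm : MeasurableSet G :=
      measurableSet_le (by fun_prop) measurable_const
    -- Step A : on G the density ratio is at most exp ε
    have hptw : ∀ x ∈ S ∩ G,
        gaussianPDF (f D) v x ≤ ENNReal.ofReal (Real.exp ε) * gaussianPDF (f D') v x := by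
      intro x hx
      have hxG : a*(2*x - (f D + f D')) ≤ 2*σ^2*ε := hx.2
      rw [gaussianPDF, gaussianPDF, ← ENNReal.ofReal_mul (Real.exp_pos ε).le]
      apply ENNReal.ofReal_le_ofReal
      unfold gaussianPDFReal
      rw [show Real.exp ε * ((√(2*π*(v:ℝ)))⁻¹ * rexp (-(x - f D')^2/(2*(v:ℝ))))
          = (√(2*π*(v:ℝ)))⁻¹ * rexp (ε + -(x - f D')^2/(2*(v:ℝ))) by
        rw [Real.exp_add]; ring]
      apply mul_le_mul_of_nonneg_left _ (by positivity)
      apply Real.exp_le_exp.mpr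
      have hvc : (v:ℝ) = σ^2 := rfl
      rw [hvc, ← sub_nonneg,
        show ε + -(x - f D')^2/(2*σ^2) - (-(x - f D)^2/(2*σ^2))
          = (2*σ^2*ε - ((x - f D')^2 - (x - f D)^2))/(2*σ^2) by field_simp; ring]
      apply div_nonneg _ (by positivity)
      have hid : (x - f D')^2 - (x - f D)^2 = a*(2*x - (f D + f D')) := by
        rw [hadef]; ring
      rw [hid]
      linarith
    have hA : gaussianReal (f D) v (S ∩ G)
        ≤ ENNReal.ofReal (Real.exp ε) * gaussianReal (f D') v (S ∩ G) := by
      rw [gaussianReal_apply _ hv, gaussianReal_apply _ hv,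
        ← lintegral_const_mul _ (measurable_gaussianPDF _ _)]
      exact setLIntegral_mono ((measurable_gaussianPDF _ _).const_mul _) hptw
    -- Step B : the bad set has mass at most δ
    have hB : gaussianReal (f D) v Gᶜ ≤ ENNReal.ofReal δ := by
      rcases ha0.lt_or_gt with hneg | hpos
      · -- a < 0
        set b : ℝ := -a with hbdef
        clear_value b
        have hb : 0 < b := by rw [hbdef]; linarith
        have hbΔ : b ≤ Δ := hbdef ▸ (neg_le_abs a).trans haΔ
        have hcomp : Gᶜ ⊆ Set.Iio (f D - (σ^2*ε/b - b/2)) := by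
          intro x hx
          simp only [hG, Set.mem_compl_iff, Set.mem_setOf_eq, not_le] at hx
          have h := hx
          rw [Set.mem_Iio]
          have hD' : f D' = f D + b := by rw [hbdef, hadef]; ring
          rw [hadef, hD'] at h
          have hgoal : σ^2*ε < (f D - x + b/2)*b := by nlinarith [h]
          have h2 := (div_lt_iff₀ hb).mpr hgoal
          linarith
        refine (measure_mono hcomp).trans ?_
        rw [gauss_Iio_eq_Ioi, show 2*(f D) - (f D - (σ^2*ε/b - b/2))
          = f D + (σ^2*ε/b - b/2) by ring]
        exact bad_bound hε hε1 hδ hδ1 hΔ hσ hb hbΔ (f D)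
      · -- a > 0
        have haΔ' : a ≤ Δ := (le_abs_self a).trans haΔ
        have hcomp : Gᶜ ⊆ Set.Ioi (f D + (σ^2*ε/a - a/2)) := by
          intro x hx
          simp only [hG, Set.mem_compl_iff, Set.mem_setOf_eq, not_le] at hx
          have h := hx
          rw [Set.mem_Ioi]
          have hD' : f D' = f D - a := by rw [hadef]; ring
          rw [hD'] at h
          have hgoal : σ^2*ε < (x - f D + a/2)*a := by nlinarith [h]
          have h2 := (div_lt_iff₀ hpos).mpr hgoal
          linarith
        exact (measure_mono hcomp).trans (bad_bound hε hε1 hδ hδ1 hΔ hσ hpos haΔ' (f D))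
    -- combine
    calc gaussianReal (f D) v S
        ≤ gaussianReal (f D) v (S ∩ G) + gaussianReal (f D) v Gᶜ := by
          refine (measure_mono (show S ⊆ (S ∩ G) ∪ Gᶜ from ?_)).trans (measure_union_le _ _)
          intro x hx
          by_cases hxg : x ∈ G
          · exact Or.inl ⟨hx, hxg⟩
          · exact Or.inr hxg
      _ ≤ ENNReal.ofReal (Real.exp ε) * gaussianReal (f D') v S + ENNReal.ofReal δ := by
          refine add_le_add (hA.trans ?_) hB
          exact mul_le_mul_right (measure_mono Set.inter_subset_left) _
end

section
/- Sequential composition for two mechanisms: Let ι be a finite nonempty index set and 𝒳 a type of records, and model datasets as functions D : ι → 𝒳. Let Ω₁ and Ω₂ be measurable spaces, and let M₁ and M₂ assign to each dataset probability measures M₁(D) on Ω₁ and M₂(D) on Ω₂. Suppose M₁ satisfies ε₁-differential privacy and M₂ satisfies ε₂-differential privacy, with ε₁, ε₂ ≥ 0. Then the composed mechanism D ↦ M₁(D) ⊗ M₂(D) (the product measure on Ω₁ × Ω₂) satisfies (ε₁ + ε₂)-differential privacy: for all neighbouring datasets D, D′ and every measurable set S ⊆ Ω₁ × Ω₂, (M₁(D)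 ⊗ M₂(D))(S) ≤ exp(ε₁ + ε₂) · (M₁(D′) ⊗ M₂(D′))(S). -/
open MeasureTheory

/-- Sequential composition for two mechanisms: if `M₁` is `ε₁`-differentially private
and `M₂` is `ε₂`-differentially private, then the composed mechanism
`D ↦ M₁(D) ⊗ M₂(D)` is `(ε₁ + ε₂)`-differentially private. -/
theorem sequential_composition_two {ι 𝒳 Ω₁ Ω₂ : Type*} [Fintype ι] [Nonempty ι]
    [MeasurableSpace Ω₁] [MeasurableSpace Ω₂]
    (M₁ : (ι → 𝒳) → Measure Ω₁) (M₂ : (ι → 𝒳) → Measure Ω₂)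
    (hM₁prob : ∀ D, IsProbabilityMeasure (M₁ D))
    (hM₂prob : ∀ D, IsProbabilityMeasure (M₂ D))
    (ε₁ ε₂ : ℝ) (hε₁ : 0 ≤ ε₁) (hε₂ : 0 ≤ ε₂)
    (hM₁ : ∀ D D' : ι → 𝒳, Neighbouring D D' → ∀ S : Set Ω₁, MeasurableSet S →
      M₁ D S ≤ ENNReal.ofReal (Real.exp ε₁) * M₁ D' S)
    (hM₂ : ∀ D D' : ι → 𝒳, Neighbouring D D' → ∀ S : Set Ω₂, MeasurableSet S →
      M₂ D S ≤ ENNReal.ofReal (Real.exp ε₂) * M₂ D' S) :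
    ∀ D D' : ι → 𝒳, Neighbouring D D' → ∀ S : Set (Ω₁ × Ω₂), MeasurableSet S →
      (M₁ D).prod (M₂ D) S ≤
        ENNReal.ofReal (Real.exp (ε₁ + ε₂)) * (M₁ D').prod (M₂ D') S := by
  intro D D' hnb S hS
  haveI := hM₂prob D
  haveI := hM₂prob D'
  have hle : M₁ D ≤ ENNReal.ofReal (Real.exp ε₁) • M₁ D' :=
    Measure.le_iff.2 fun s hs => by simpa using hM₁ D D' hnb s hs
  rw [Measure.prod_apply hS, Measure.prod_apply hS]
  calc ∫⁻ x, M₂ D (Prod.mk x ⁻¹' S) ∂ M₁ D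
      ≤ ∫⁻ x, ENNReal.ofReal (Real.exp ε₂) * M₂ D' (Prod.mk x ⁻¹' S) ∂ M₁ D :=
        lintegral_mono fun x => hM₂ D D' hnb _ (measurable_prodMk_left hS)
    _ = ENNReal.ofReal (Real.exp ε₂) * ∫⁻ x, M₂ D' (Prod.mk x ⁻¹' S) ∂ M₁ D :=
        lintegral_const_mul' _ _ ENNReal.ofReal_ne_top
    _ ≤ ENNReal.ofReal (Real.exp ε₂) *
          (ENNReal.ofReal (Real.exp ε₁) * ∫⁻ x, M₂ D' (Prod.mk x ⁻¹' S) ∂ M₁ D') := by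
        gcongr
        calc ∫⁻ x, M₂ D' (Prod.mk x ⁻¹' S) ∂ M₁ D
            ≤ ∫⁻ x, M₂ D' (Prod.mk x ⁻¹' S) ∂ (ENNReal.ofReal (Real.exp ε₁) • M₁ D') :=
              lintegral_mono' hle le_rfl
          _ = ENNReal.ofReal (Real.exp ε₁) * ∫⁻ x, M₂ D' (Prod.mk x ⁻¹' S) ∂ M₁ D' :=
              lintegral_smul_measure _ _
    _ = ENNReal.ofReal (Real.exp (ε₁ + ε₂)) * ∫⁻ x, M₂ D' (Prod.mk x ⁻¹' S) ∂ M₁ D' := by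
        rw [← mul_assoc, ← ENNReal.ofReal_mul (Real.exp_nonneg _), ← Real.exp_add, add_comm ε₂ ε₁]
end

section
/- Sequential composition (Theorem 2 of the paper): Let ι be a finite nonempty index set and 𝒳 a type of records, and model datasets as functions D : ι → 𝒳. Let m ≥ 1, let Ω₁, …, Ω_m be measurable spaces, and for each i ∈ {1, …, m} let M_i assign to each dataset a probability measure M_i(D) on Ω_i, and suppose each M_i satisfies ε-differential privacy for a fixed ε ≥ 0. Then the composed mechanism D ↦ ⊗_{i=1}^m M_i(D) (the finite product measure on Ω₁ × ⋯ × Ω_m) satisfies (m·ε)-differential privacy: for all neighbouring datasets D, D′ and every measurable set S of the product space, (⊗_i M_i(D))(S) ≤ exp(m·ε) · (⊗_i M_i(D′))(S). -/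
open MeasureTheory

lemma pi_mono_aux {n : ℕ} {Ω : Fin n → Type*} [∀ i, MeasurableSpace (Ω i)]
    (μ ν : ∀ i, Measure (Ω i)) [∀ i, SigmaFinite (μ i)] [∀ i, SigmaFinite (ν i)]
    (h : ∀ i, μ i ≤ ν i) : Measure.pi μ ≤ Measure.pi ν := by
  intro S
  by_cases hS : MeasurableSet S
  · rw [Measure.pi_def, Measure.pi_def,
      toMeasure_apply _ _ hS, toMeasure_apply _ _ hS]
    refine le_trans ?_ le_rfl
    have : (OuterMeasure.pi fun i => (μ i).toOuterMeasure) ≤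
        OuterMeasure.pi fun i => (ν i).toOuterMeasure := by
      rw [OuterMeasure.le_pi]
      intro s _
      refine (OuterMeasure.pi_pi_le _ s).trans ?_
      exact Finset.prod_le_prod' fun i _ => h i _
    exact this S
  · rw [measure_eq_iInf, measure_eq_iInf]
    refine le_iInf fun t => le_iInf fun hts => le_iInf fun ht => ?_
    refine iInf_le_of_le t (iInf_le_of_le hts (iInf_le_of_le ht ?_))
    by_cases hSt : MeasurableSet t
    · rw [Measure.pi_def, Measure.pi_def,
        toMeasure_apply _ _ hSt, toMeasure_apply _ _ hSt]
      have : (OuterMeasure.pi fun i => (μ i).toOuterMeasure) ≤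
          OuterMeasure.pi fun i => (ν i).toOuterMeasure := by
        rw [OuterMeasure.le_pi]
        intro s _
        refine (OuterMeasure.pi_pi_le _ s).trans ?_
        exact Finset.prod_le_prod' fun i _ => h i _
      exact this t
    · exact absurd ht hSt

/-- Sequential composition: if each of `m` mechanisms `M i` is `ε`-differentially
private, then the composed mechanism `D ↦ ⊗ᵢ Mᵢ(D)` (product measure of the `m`
independent outputs) is `(m·ε)`-differentially private. -/
theorem sequential_composition {ι 𝒳 : Type*} [Fintype ι] [Nonempty ι]
    (m : ℕ) (hm : 1 ≤ m) (Ω : Fin m → Type*) [∀ i, MeasurableSpace (Ω i)]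
    (M : ∀ i : Fin m, (ι → 𝒳) → Measure (Ω i))
    (hMprob : ∀ i D, IsProbabilityMeasure (M i D))
    (ε : ℝ) (hε : 0 ≤ ε)
    (hM : ∀ i : Fin m, ∀ D D' : ι → 𝒳, Neighbouring D D' →
      ∀ S : Set (Ω i), MeasurableSet S →
        M i D S ≤ ENNReal.ofReal (Real.exp ε) * M i D' S) :
    ∀ D D' : ι → 𝒳, Neighbouring D D' → ∀ S : Set (∀ i, Ω i), MeasurableSet S →
      Measure.pi (fun i => M i D) S ≤
        ENNReal.ofReal (Real.exp (m * ε)) * Measure.pi (fun i => M i D') S := by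
  intro D D' hDD' S hS
  set c : ENNReal := ENNReal.ofReal (Real.exp ε) with hc
  have hcfin : c ≠ ⊤ := ENNReal.ofReal_ne_top
  haveI : ∀ i, IsProbabilityMeasure (M i D) := fun i => hMprob i D
  haveI : ∀ i, IsProbabilityMeasure (M i D') := fun i => hMprob i D'
  set κ : ∀ i : Fin m, Measure (Ω i) := fun i => c • M i D' with hκ
  haveI : ∀ i, IsFiniteMeasure (κ i) := fun i => by
    refine ⟨?_⟩
    simp only [hκ, Measure.smul_apply, smul_eq_mul]
    exact ENNReal.mul_lt_top hcfin.lt_top (measure_lt_top _ _)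
  have hle : ∀ i, M i D ≤ κ i := by
    intro i
    refine Measure.le_iff.mpr fun s hs => ?_
    simpa [hκ] using hM i D D' hDD' s hs
  have key : Measure.pi (fun i => M i D) ≤ Measure.pi κ := by
    haveI : ∀ i, SigmaFinite ((fun i => M i D) i) := fun i => inferInstance
    haveI : ∀ i, SigmaFinite (κ i) := fun i => inferInstance
    exact @pi_mono_aux m Ω _ (fun i => M i D) κ (fun i => inferInstance) (fun i => inferInstance) hle
  have hpiκ : Measure.pi κ = (c ^ m) • Measure.pi (fun i => M i D') := by
    refine Measure.pi_eq fun s hs => ?_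
    simp only [Measure.smul_apply, smul_eq_mul, Measure.pi_pi, hκ]
    rw [Finset.prod_mul_distrib, Finset.prod_const, Finset.card_univ, Fintype.card_fin]
  have hcpow : c ^ m = ENNReal.ofReal (Real.exp (m * ε)) := by
    rw [hc, ← ENNReal.ofReal_pow (Real.exp_nonneg ε), ← Real.exp_nat_mul]
  calc Measure.pi (fun i => M i D) S ≤ Measure.pi κ S := key S
    _ = ENNReal.ofReal (Real.exp (m * ε)) * Measure.pi (fun i => M i D') S := by
        rw [hpiκ, hcpow]; rfl
end

section
/- Parallel composition (Theorem 1 of the paper): Let ι be a finite nonempty index set and 𝒳 a type of records, and model datasets as functions D : ι → 𝒳. Let m ≥ 1 and let part : ι → Fin m partition the individuals into m disjoint groups; for a dataset D, let D|_j denote the restriction of D to the subtype {i : ι // part i = j}. For each j ∈ Fin m, let M_j assign to each function on {i // part i = j} a probability measure M_j(·) on a measurable space Ω_j, and suppose each M_j satisfies ε_j-differential privacy with respect to neighbouring restricted datasets (functions on the subtype differing at exactly one index), with ε_j ≥ 0. Then the combined mechanism D ↦ ⊗_{j=1}^m M_j(D|_j) satisfies (max_j ε_j)-differential privacy: for all neighbouring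 datasets D, D′ and every measurable set S of the product space, (⊗_j M_j(D|_j))(S) ≤ exp(max_j ε_j) · (⊗_j M_j(D′|_j))(S). -/
open MeasureTheory
open scoped ENNReal

/-- Monotonicity of the product measure. -/
theorem pi_le_pi_of_le {ι : Type*} [Fintype ι] {α : ι → Type*}
    [∀ i, MeasurableSpace (α i)] {μ ν : ∀ i, Measure (α i)}
    (h : ∀ i, μ i ≤ ν i) : Measure.pi μ ≤ Measure.pi ν := by
  have hout : (OuterMeasure.pi fun i => (μ i).toOuterMeasure) ≤
      OuterMeasure.pi fun i => (ν i).toOuterMeasure := by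
    rw [OuterMeasure.le_pi]
    intro s _
    refine (OuterMeasure.pi_pi_le _ s).trans ?_
    exact Finset.prod_le_prod' fun i _ => h i (s i)
  rw [Measure.le_iff]
  intro s hs
  rw [Measure.pi_def, Measure.pi_def, toMeasure_apply _ _ hs, toMeasure_apply _ _ hs]
  exact hout s

/-- Scaling a single factor of a product of probability measures scales the product. -/
theorem pi_if_smul {ι : Type*} [Fintype ι] [DecidableEq ι] {α : ι → Type*}
    [∀ i, MeasurableSpace (α i)] (μ : ∀ i, Measure (α i))
    [∀ i, IsProbabilityMeasure (μ i)] (j0 : ι) (c : ℝ≥0∞) (hc : c ≠ ∞) :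
    Measure.pi (fun j => if j = j0 then c • μ j else μ j) = c • Measure.pi μ := by
  haveI : ∀ j, SigmaFinite ((fun j => if j = j0 then c • μ j else μ j) j) := by
    intro j
    dsimp only
    split_ifs with hj
    · haveI : IsFiniteMeasure (c • μ j) := by
        constructor
        simp only [Measure.smul_apply, smul_eq_mul, measure_univ, mul_one]
        exact hc.lt_top
      infer_instance
    · infer_instance
  refine Measure.pi_eq fun s hs => ?_
  simp only [Measure.smul_apply, smul_eq_mul]
  rw [Measure.pi_pi]
  have : ∀ j, ((if j = j0 then c • μ j else μ j) (s j)) =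
      (if j = j0 then c else 1) * μ j (s j) := by
    intro j
    by_cases hj : j = j0 <;> simp [hj]
  simp only [this]
  rw [Finset.prod_mul_distrib, Finset.prod_ite_eq' Finset.univ j0 fun _ => c]
  simp

/-- Parallel composition: partition the individuals into `m` groups via
`part : ι → Fin m`, and apply the mechanism `M j` (which is `ε j`-differentially
private on its own group) to the restriction of the dataset to group `j`.
Then the combined mechanism `D ↦ ⊗ⱼ Mⱼ(D|ⱼ)` is `(max_j ε j)`-differentially
private. -/
theorem parallel_composition {ι 𝒳 : Type*} [Fintype ι] [Nonempty ι]
    (m : ℕ) (hm : 1 ≤ m) (part : ι → Fin m)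
    (Ω : Fin m → Type*) [∀ j, MeasurableSpace (Ω j)]
    (M : ∀ j : Fin m, ({i : ι // part i = j} → 𝒳) → Measure (Ω j))
    (hMprob : ∀ j E, IsProbabilityMeasure (M j E))
    (ε : Fin m → ℝ) (hε : ∀ j, 0 ≤ ε j)
    (hM : ∀ j : Fin m, ∀ E E' : {i : ι // part i = j} → 𝒳, Neighbouring E E' →
      ∀ S : Set (Ω j), MeasurableSet S →
        M j E S ≤ ENNReal.ofReal (Real.exp (ε j)) * M j E' S) :
    ∀ D D' : ι → 𝒳, Neighbouring D D' → ∀ S : Set (∀ j, Ω j), MeasurableSet S →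
      Measure.pi (fun j => M j (fun i => D i.1)) S ≤
        ENNReal.ofReal
            (Real.exp (Finset.univ.sup'
              (Finset.univ_nonempty_iff.mpr ⟨⟨0, hm⟩⟩) ε)) *
          Measure.pi (fun j => M j (fun i => D' i.1)) S := by
  intro D D' hDD' S hS
  obtain ⟨i0, hne, hagree⟩ := hDD'
  haveI : ∀ j, IsProbabilityMeasure (M j (fun i => D i.1)) := fun j => hMprob j _
  haveI : ∀ j, IsProbabilityMeasure (M j (fun i => D' i.1)) := fun j => hMprob j _
  set c : ℝ≥0∞ := ENNReal.ofReal
      (Real.exp (Finset.univ.sup' (Finset.univ_nonempty_iff.mpr ⟨⟨0, hm⟩⟩) ε)) with hc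
  have hc_top : c ≠ ∞ := ENNReal.ofReal_ne_top
  set j0 : Fin m := part i0 with hj0
  set ν : ∀ j, Measure (Ω j) :=
    fun j => if j = j0 then c • M j (fun i => D' i.1) else M j (fun i => D' i.1) with hν
  have hle : ∀ j, M j (fun i => D i.1) ≤ ν j := by
    intro j
    by_cases hj : j = j0
    · subst hj
      rw [hν]
      simp only [if_pos rfl]
      rw [Measure.le_iff]
      intro s hs
      have hnb : Neighbouring (fun i : {i : ι // part i = j0} => D i.1)
          (fun i => D' i.1) := by
        refine ⟨⟨i0, hj0.symm⟩, hne, fun k hk => ?_⟩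
        refine hagree k.1 fun h => hk (Subtype.ext h)
      calc M j0 (fun i => D i.1) s
          ≤ ENNReal.ofReal (Real.exp (ε j0)) * M j0 (fun i => D' i.1) s :=
            hM j0 _ _ hnb s hs
        _ ≤ c * M j0 (fun i => D' i.1) s := by
            refine mul_le_mul_left ?_ _
            refine ENNReal.ofReal_le_ofReal (Real.exp_le_exp.2 ?_)
            exact Finset.le_sup' ε (Finset.mem_univ j0)
        _ = (c • M j0 (fun i => D' i.1)) s := by
            simp [Measure.smul_apply]
    · have heq : (fun i : {i : ι // part i = j} => D i.1) = fun i => D' i.1 := by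
        funext i
        refine hagree i.1 fun h => hj ?_
        rw [← i.2, h, hj0]
      rw [hν]
      simp only [if_neg hj, heq]
      exact le_refl _
  have h1 : Measure.pi (fun j => M j (fun i => D i.1)) S ≤ Measure.pi ν S :=
    pi_le_pi_of_le hle S
  have h2 : Measure.pi ν = c • Measure.pi (fun j => M j (fun i => D' i.1)) :=
    pi_if_smul _ j0 c hc_top
  rw [h2] at h1
  simpa [Measure.smul_apply] using h1
end
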